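/- For α ∈ (0,1) and η ≥ 0, there exists C(α,η) > 0 such that for all t > 0, ∫_0^t min{(t−s)^{−α−1}, (t−s)^{α−1}} · (min{s^{−α},1})^{1+η} ds ≤ C(α,η) · min{t^{−α},1}. -/

import Mathlib

open MeasureTheory Real Set

private lemma cke_min_pos {s α : ℝ} (hs : 0 < s) : 0 < min (s ^ (-α)) 1 :=
  lt_min (Real.rpow_pos_of_pos hs _) one_pos

private lemma cke_factor_le {s α η : ℝ} (hs : 0 < s) (hη : 0 ≤ η) :
    (min (s ^ (-α)) 1) ^ (1 + η) ≤ min (s ^ (-α)) 1 := by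
  have h0 : 0 < min (s ^ (-α)) 1 := cke_min_pos hs
  have := Real.rpow_le_rpow_of_exponent_ge h0 (min_le_right _ _)
    (by linarith : (1:ℝ) ≤ 1 + η)
  simpa [Real.rpow_one] using this

theorem convolution_kernel_estimate_eta (α η : ℝ) (hα : α ∈ Set.Ioo (0:ℝ) 1) (hη : 0 ≤ η) :
    ∃ C : ℝ, 0 < C ∧ ∀ t : ℝ, 0 < t →
      ∫ s in Set.Ioo 0 t,
          min ((t - s) ^ (-α - 1)) ((t - s) ^ (α - 1)) * (min (s ^ (-α)) 1) ^ (1 + η)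
        ≤ C * min (t ^ (-α)) 1 := by
  obtain ⟨hα0, hα1⟩ := hα
  have h1α : (0:ℝ) < 1 - α := by linarith
  refine ⟨2 / (1 - α) + 8 / α, by positivity, ?_⟩
  intro t ht
  set f : ℝ → ℝ := fun s =>
    min ((t - s) ^ (-α - 1)) ((t - s) ^ (α - 1)) * (min (s ^ (-α)) 1) ^ (1 + η) with hfdef
  have hfmeas : Measurable f := by
    apply Measurable.mul <;> fun_prop
  have hfnonneg : ∀ s : ℝ, 0 < s → s ≤ t → 0 ≤ f s := by
    intro s hs hst
    have h0 : (0:ℝ) ≤ t - s := by linarith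
    exact mul_nonneg (le_min (Real.rpow_nonneg h0 _) (Real.rpow_nonneg h0 _))
      (Real.rpow_nonneg (cke_min_pos hs).le _)
  rcases le_or_gt t 2 with h2 | h2
  · -- small time case: t ≤ 2
    have hmaj : IntegrableOn (fun s => (t - s) ^ (α - 1)) (Set.Ioo 0 t) := by
      have h1 : IntervalIntegrable (fun x : ℝ => x ^ (α - 1)) volume 0 t :=
        intervalIntegral.intervalIntegrable_rpow' (by linarith)
      have h2' := (h1.comp_sub_left t).symm
      simp only [sub_zero, sub_self] at h2'
      exact ((intervalIntegrable_iff_integrableOn_Ioc_of_le ht.le).mp h2').mono_set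
        Set.Ioo_subset_Ioc_self
    have hle : (∫ s in Set.Ioo 0 t, f s) ≤ ∫ s in Set.Ioo 0 t, (t - s) ^ (α - 1) := by
      apply integral_mono_of_nonneg _ hmaj
      · filter_upwards [ae_restrict_mem measurableSet_Ioo] with s hs
        have h1 : min ((t - s) ^ (-α - 1)) ((t - s) ^ (α - 1)) ≤ (t - s) ^ (α - 1) :=
          min_le_right _ _
        have h2' : (min (s ^ (-α)) 1) ^ (1 + η) ≤ 1 :=
          Real.rpow_le_one (cke_min_pos hs.1).le (min_le_right _ _) (by linarith)
        have h3 : (0:ℝ) ≤ t - s := by linarith [hs.2]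
        calc f s ≤ (t - s) ^ (α - 1) * 1 :=
              mul_le_mul h1 h2' (Real.rpow_nonneg (cke_min_pos hs.1).le _)
                (Real.rpow_nonneg h3 _)
          _ = (t - s) ^ (α - 1) := mul_one _
      · filter_upwards [ae_restrict_mem measurableSet_Ioo] with s hs
        exact hfnonneg s hs.1 hs.2.le
    have hval : (∫ s in Set.Ioo 0 t, (t - s) ^ (α - 1)) = t ^ α / α := by
      rw [← integral_Ioc_eq_integral_Ioo, ← intervalIntegral.integral_of_le ht.le,
        intervalIntegral.integral_comp_sub_left (fun x : ℝ => x ^ (α - 1)) t, sub_self, sub_zero,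
        integral_rpow (Or.inl (by linarith)), sub_add_cancel,
        Real.zero_rpow hα0.ne', sub_zero]
    have hmin : (1:ℝ)/2 ≤ min (t ^ (-α)) 1 := by
      have ha : (2:ℝ) ^ (-α) ≤ t ^ (-α) :=
        Real.rpow_le_rpow_of_nonpos ht h2 (by linarith)
      have hb : (2:ℝ) ^ (-1 : ℝ) ≤ (2:ℝ) ^ (-α) :=
        Real.rpow_le_rpow_of_exponent_le one_le_two (by linarith)
      have hc : (2:ℝ) ^ (-1 : ℝ) = 1/2 := by
        rw [Real.rpow_neg (by norm_num), Real.rpow_one]; norm_num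
      rw [hc] at hb
      exact le_min (hb.trans ha) (by norm_num)
    have htα : t ^ α ≤ 2 := by
      have h1 : t ^ α ≤ (2:ℝ) ^ α := Real.rpow_le_rpow ht.le h2 hα0.le
      have h2' : (2:ℝ) ^ α ≤ (2:ℝ) ^ (1:ℝ) :=
        Real.rpow_le_rpow_of_exponent_le one_le_two (by linarith)
      rw [Real.rpow_one] at h2'
      linarith
    have key : (∫ s in Set.Ioo 0 t, f s) ≤ 2 / α := by
      rw [hval] at hle
      calc (∫ s in Set.Ioo 0 t, f s) ≤ t ^ α / α := hle
        _ ≤ 2 / α := by gcongr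
    calc (∫ s in Set.Ioo 0 t, f s) ≤ 2 / α := key
      _ ≤ (2 / (1 - α) + 8 / α) * (1/2) := by
          have h4 : (2:ℝ) / α ≤ 4 / α := by gcongr <;> norm_num
          have h5 : (0:ℝ) ≤ 1 / (1 - α) := by positivity
          have : (2 / (1 - α) + 8 / α) * (1/2) = 1 / (1 - α) + 4 / α := by ring
          rw [this]; linarith
      _ ≤ (2 / (1 - α) + 8 / α) * min (t ^ (-α)) 1 := by
          have hC : (0:ℝ) ≤ 2 / (1 - α) + 8 / α := by positivity
          exact mul_le_mul_of_nonneg_left hmin hC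
  · -- large time case: t > 2
    have ht2 : (1:ℝ) ≤ t / 2 := by linarith
    have ht2pos : (0:ℝ) < t / 2 := by linarith
    have ht21 : t / 2 ≤ t - 1 := by linarith
    have ht1t : t - 1 ≤ t := by linarith
    have htne : (0:ℝ) ∉ Set.uIcc (1:ℝ) (t/2) := by
      rw [Set.uIcc_of_le ht2]
      intro h
      exact absurd h.1 (by norm_num)
    -- the three majorants
    set g1 : ℝ → ℝ := fun s => (t/2) ^ (-α - 1) * s ^ (-α) with hg1def
    set g2 : ℝ → ℝ := fun s => (t - s) ^ (-α - 1) * (t/2) ^ (-α) with hg2def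
    set g3 : ℝ → ℝ := fun s => (t - s) ^ (α - 1) * (t/2) ^ (-α) with hg3def
    -- pointwise bounds
    have hb1 : ∀ s ∈ Set.Ioc 0 (t/2), f s ≤ g1 s := by
      intro s hs
      have hts : t/2 ≤ t - s := by linarith [hs.2]
      have hK : min ((t - s) ^ (-α - 1)) ((t - s) ^ (α - 1)) ≤ (t/2) ^ (-α - 1) :=
        (min_le_left _ _).trans (Real.rpow_le_rpow_of_nonpos ht2pos hts (by linarith))
      have hF : (min (s ^ (-α)) 1) ^ (1 + η) ≤ s ^ (-α) :=
        (cke_factor_le hs.1 hη).trans (min_le_left _ _)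
      exact mul_le_mul hK hF (Real.rpow_nonneg (cke_min_pos hs.1).le _)
        (Real.rpow_nonneg ht2pos.le _)
    have hfac : ∀ s : ℝ, t/2 ≤ s → 0 < s →
        (min (s ^ (-α)) 1) ^ (1 + η) ≤ (t/2) ^ (-α) := by
      intro s hs hs0
      refine (cke_factor_le hs0 hη).trans ((min_le_left _ _).trans ?_)
      exact Real.rpow_le_rpow_of_nonpos ht2pos hs (by linarith)
    have hb2 : ∀ s ∈ Set.Ioc (t/2) (t - 1), f s ≤ g2 s := by
      intro s hs
      have hs0 : 0 < s := lt_of_lt_of_le ht2pos hs.1.le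
      have hts : (0:ℝ) ≤ t - s := by linarith [hs.2]
      exact mul_le_mul (min_le_left _ _) (hfac s hs.1.le hs0)
        (Real.rpow_nonneg (cke_min_pos hs0).le _) (Real.rpow_nonneg hts _)
    have hb3 : ∀ s ∈ Set.Ioc (t - 1) t, f s ≤ g3 s := by
      intro s hs
      have hs0 : 0 < s := by linarith [hs.1]
      have hts : (0:ℝ) ≤ t - s := by linarith [hs.2]
      exact mul_le_mul (min_le_right _ _) (hfac s (by linarith [hs.1]) hs0)
        (Real.rpow_nonneg (cke_min_pos hs0).le _) (Real.rpow_nonneg hts _)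
    -- integrability of majorants
    have hg1int : IntegrableOn g1 (Set.Ioc 0 (t/2)) := by
      have h1 : IntervalIntegrable (fun x : ℝ => x ^ (-α)) volume 0 (t/2) :=
        intervalIntegral.intervalIntegrable_rpow' (by linarith)
      exact ((intervalIntegrable_iff_integrableOn_Ioc_of_le ht2pos.le).mp h1).const_mul _
    have hg2int : IntegrableOn g2 (Set.Ioc (t/2) (t - 1)) := by
      have h1 : IntervalIntegrable (fun x : ℝ => x ^ (-α - 1)) volume 1 (t/2) :=
        intervalIntegral.intervalIntegrable_rpow (Or.inr htne)
      have h2' := (h1.comp_sub_left t).symm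
      have h3 : t - t/2 = t/2 := by ring
      rw [h3] at h2'
      exact ((intervalIntegrable_iff_integrableOn_Ioc_of_le ht21).mp h2').mul_const _
    have hg3int : IntegrableOn g3 (Set.Ioc (t - 1) t) := by
      have h1 : IntervalIntegrable (fun x : ℝ => x ^ (α - 1)) volume 0 1 :=
        intervalIntegral.intervalIntegrable_rpow' (by linarith)
      have h2' := h1.comp_sub_left t
      simp only [sub_zero] at h2'
      exact ((intervalIntegrable_iff_integrableOn_Ioc_of_le ht1t).mp h2'.symm).mul_const _
    -- integrability of f on each piece
    have hfint : ∀ (a b : ℝ) (g : ℝ → ℝ), 0 < a → b ≤ t → IntegrableOn g (Set.Ioc a b) →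
        (∀ s ∈ Set.Ioc a b, f s ≤ g s) → IntegrableOn f (Set.Ioc a b) := by
      intro a b g ha hb hg hfg
      apply hg.mono' (hfmeas.aestronglyMeasurable.restrict)
      filter_upwards [ae_restrict_mem measurableSet_Ioc] with s hs
      rw [Real.norm_of_nonneg (hfnonneg s (lt_trans ha hs.1) (hs.2.trans hb))]
      exact hfg s hs
    have hf1 : IntegrableOn f (Set.Ioc 0 (t/2)) := by
      apply (hg1int.mono' (hfmeas.aestronglyMeasurable.restrict))
      filter_upwards [ae_restrict_mem measurableSet_Ioc] with s hs
      rw [Real.norm_of_nonneg (hfnonneg s hs.1 (hs.2.trans (by linarith)))]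
      exact hb1 s hs
    have hf2 : IntegrableOn f (Set.Ioc (t/2) (t - 1)) :=
      hfint _ _ g2 ht2pos ht1t hg2int hb2
    have hf3 : IntegrableOn f (Set.Ioc (t - 1) t) :=
      hfint _ _ g3 (by linarith) le_rfl hg3int hb3
    -- split the integral
    have hsplit : (∫ s in Set.Ioo 0 t, f s) =
        (∫ s in Set.Ioc 0 (t/2), f s) + (∫ s in Set.Ioc (t/2) (t - 1), f s)
          + (∫ s in Set.Ioc (t - 1) t, f s) := by
      have e1 : Set.Ioc (0:ℝ) t
          = (Set.Ioc 0 (t/2) ∪ Set.Ioc (t/2) (t - 1)) ∪ Set.Ioc (t - 1) t := by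
        rw [Set.Ioc_union_Ioc_eq_Ioc ht2pos.le ht21,
          Set.Ioc_union_Ioc_eq_Ioc (le_trans ht2pos.le ht21) ht1t]
      have hdisj1 : Disjoint (Set.Ioc (0:ℝ) (t/2) ∪ Set.Ioc (t/2) (t - 1))
          (Set.Ioc (t - 1) t) := by
        apply (Set.Ioc_disjoint_Ioc_of_le (a := (0:ℝ)) le_rfl).mono_left
        rw [Set.Ioc_union_Ioc_eq_Ioc ht2pos.le ht21]
      rw [← integral_Ioc_eq_integral_Ioo, e1,
        setIntegral_union hdisj1 measurableSet_Ioc (hf1.union hf2) hf3,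
        setIntegral_union (Set.Ioc_disjoint_Ioc_of_le le_rfl) measurableSet_Ioc hf1 hf2]
    -- value/estimate for piece 1
    have hint1 : (∫ s in Set.Ioc 0 (t/2), g1 s) ≤ (2 / (1 - α)) * t ^ (-α) := by
      have hval : (∫ s in Set.Ioc 0 (t/2), (fun x : ℝ => x ^ (-α)) s)
          = (t/2) ^ (1 - α) / (1 - α) := by
        rw [← intervalIntegral.integral_of_le ht2pos.le,
          integral_rpow (Or.inl (by linarith)),
          Real.zero_rpow (by intro h; rw [neg_add_eq_zero] at h; linarith), sub_zero,
          show -α + 1 = 1 - α from by ring]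
      have : (∫ s in Set.Ioc 0 (t/2), g1 s)
          = (t/2) ^ (-α - 1) * ((t/2) ^ (1 - α) / (1 - α)) := by
        rw [hg1def]
        rw [integral_const_mul]
        rw [hval]
      rw [this]
      have hcomb : (t/2) ^ (-α - 1) * (t/2) ^ (1 - α) = (t/2) ^ (-(2*α)) := by
        rw [← Real.rpow_add ht2pos]; ring_nf
      have hmono : (t/2) ^ (-(2*α)) ≤ (t/2) ^ (-α) :=
        Real.rpow_le_rpow_of_exponent_le ht2 (by linarith)
      have h2t : (t/2) ^ (-α) ≤ 2 * t ^ (-α) := by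
        have he : (t/2 : ℝ) = t * 2⁻¹ := by ring
        have : (t/2 : ℝ) ^ (-α) = t ^ (-α) * (2:ℝ) ^ α := by
          rw [he, Real.mul_rpow ht.le (by norm_num), Real.inv_rpow (by norm_num),
            Real.rpow_neg (by norm_num : (0:ℝ) ≤ 2), inv_inv]
        rw [this]
        have h2a : (2:ℝ) ^ α ≤ 2 := by
          have := Real.rpow_le_rpow_of_exponent_le (x := 2) one_le_two hα1.le
          rwa [Real.rpow_one] at this
        have htn : (0:ℝ) ≤ t ^ (-α) := Real.rpow_nonneg ht.le _
        calc t ^ (-α) * (2:ℝ) ^ α ≤ t ^ (-α) * 2 := by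
              exact mul_le_mul_of_nonneg_left h2a htn
          _ = 2 * t ^ (-α) := by ring
      calc (t/2) ^ (-α - 1) * ((t/2) ^ (1 - α) / (1 - α))
          = ((t/2) ^ (-α - 1) * (t/2) ^ (1 - α)) / (1 - α) := by ring
        _ = (t/2) ^ (-(2*α)) / (1 - α) := by rw [hcomb]
        _ ≤ (2 * t ^ (-α)) / (1 - α) := by
            gcongr
            exact hmono.trans h2t
        _ = (2 / (1 - α)) * t ^ (-α) := by ring
    -- value/estimate for piece 2
    have hint2 : (∫ s in Set.Ioc (t/2) (t - 1), g2 s) ≤ (2 / α) * t ^ (-α) := by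
      have hval : (∫ s in Set.Ioc (t/2) (t - 1), (t - s) ^ (-α - 1)) ≤ 1 / α := by
        rw [← intervalIntegral.integral_of_le ht21,
          intervalIntegral.integral_comp_sub_left (fun x : ℝ => x ^ (-α - 1)) t]
        have h3 : t - (t - 1) = 1 := by ring
        have h4 : t - t/2 = t/2 := by ring
        rw [h3, h4, integral_rpow (Or.inr ⟨by intro h; rw [sub_eq_neg_self] at h; linarith, htne⟩)]
        have h5 : -α - 1 + 1 = -α := by ring
        rw [h5, Real.one_rpow]
        have h6 : (0:ℝ) ≤ (t/2) ^ (-α) := Real.rpow_nonneg ht2pos.le _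
        have h7 : ((t/2) ^ (-α) - 1) / (-α) = (1 - (t/2) ^ (-α)) / α := by
          rw [div_neg, ← neg_div, neg_sub]
        rw [h7]
        gcongr
        linarith
      have heq : (∫ s in Set.Ioc (t/2) (t - 1), g2 s)
          = (∫ s in Set.Ioc (t/2) (t - 1), (t - s) ^ (-α - 1)) * (t/2) ^ (-α) := by
        rw [hg2def, MeasureTheory.integral_mul_const]
      rw [heq]
      have h2t : (t/2) ^ (-α) ≤ 2 * t ^ (-α) := by
        have he : (t/2 : ℝ) = t * 2⁻¹ := by ring
        have hx : (t/2 : ℝ) ^ (-α) = t ^ (-α) * (2:ℝ) ^ α := by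
          rw [he, Real.mul_rpow ht.le (by norm_num), Real.inv_rpow (by norm_num),
            Real.rpow_neg (by norm_num : (0:ℝ) ≤ 2), inv_inv]
        rw [hx]
        have h2a : (2:ℝ) ^ α ≤ 2 := by
          have := Real.rpow_le_rpow_of_exponent_le (x := 2) one_le_two hα1.le
          rwa [Real.rpow_one] at this
        have htn : (0:ℝ) ≤ t ^ (-α) := Real.rpow_nonneg ht.le _
        nlinarith
      have h6 : (0:ℝ) ≤ (t/2) ^ (-α) := Real.rpow_nonneg ht2pos.le _
      have h8 : (0:ℝ) ≤ ∫ s in Set.Ioc (t/2) (t - 1), (t - s) ^ (-α - 1) := by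
        apply setIntegral_nonneg measurableSet_Ioc
        intro s hs
        exact Real.rpow_nonneg (by linarith [hs.2] : (0:ℝ) ≤ t - s) _
      have h9 : (0:ℝ) ≤ t ^ (-α) := Real.rpow_nonneg ht.le _
      calc (∫ s in Set.Ioc (t/2) (t - 1), (t - s) ^ (-α - 1)) * (t/2) ^ (-α)
          ≤ (1/α) * (t/2) ^ (-α) := mul_le_mul_of_nonneg_right hval h6
        _ ≤ (1/α) * (2 * t ^ (-α)) := by
            apply mul_le_mul_of_nonneg_left h2t (by positivity)
        _ = (2 / α) * t ^ (-α) := by ring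
    -- value/estimate for piece 3
    have hint3 : (∫ s in Set.Ioc (t - 1) t, g3 s) ≤ (2 / α) * t ^ (-α) := by
      have hval : (∫ s in Set.Ioc (t - 1) t, (t - s) ^ (α - 1)) = 1 / α := by
        rw [← intervalIntegral.integral_of_le ht1t,
          intervalIntegral.integral_comp_sub_left (fun x : ℝ => x ^ (α - 1)) t]
        have h3 : t - (t - 1) = 1 := by ring
        rw [h3, sub_self, integral_rpow (Or.inl (by linarith)), sub_add_cancel,
          Real.one_rpow, Real.zero_rpow hα0.ne', sub_zero]
      have heq : (∫ s in Set.Ioc (t - 1) t, g3 s)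
          = (∫ s in Set.Ioc (t - 1) t, (t - s) ^ (α - 1)) * (t/2) ^ (-α) := by
        rw [hg3def, MeasureTheory.integral_mul_const]
      rw [heq, hval]
      have h2t : (t/2) ^ (-α) ≤ 2 * t ^ (-α) := by
        have he : (t/2 : ℝ) = t * 2⁻¹ := by ring
        have hx : (t/2 : ℝ) ^ (-α) = t ^ (-α) * (2:ℝ) ^ α := by
          rw [he, Real.mul_rpow ht.le (by norm_num), Real.inv_rpow (by norm_num),
            Real.rpow_neg (by norm_num : (0:ℝ) ≤ 2), inv_inv]
        rw [hx]
        have h2a : (2:ℝ) ^ α ≤ 2 := by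
          have := Real.rpow_le_rpow_of_exponent_le (x := 2) one_le_two hα1.le
          rwa [Real.rpow_one] at this
        have htn : (0:ℝ) ≤ t ^ (-α) := Real.rpow_nonneg ht.le _
        nlinarith
      calc (1/α) * (t/2) ^ (-α) ≤ (1/α) * (2 * t ^ (-α)) := by
            apply mul_le_mul_of_nonneg_left h2t (by positivity)
        _ = (2 / α) * t ^ (-α) := by ring
    -- bound each piece integral of f by that of g
    have hle1 : (∫ s in Set.Ioc 0 (t/2), f s) ≤ ∫ s in Set.Ioc 0 (t/2), g1 s := by
      apply integral_mono_of_nonneg _ hg1int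
      · filter_upwards [ae_restrict_mem measurableSet_Ioc] with s hs
        exact hb1 s hs
      · filter_upwards [ae_restrict_mem measurableSet_Ioc] with s hs
        exact hfnonneg s hs.1 (hs.2.trans (by linarith))
    have hle2 : (∫ s in Set.Ioc (t/2) (t - 1), f s) ≤ ∫ s in Set.Ioc (t/2) (t - 1), g2 s := by
      apply integral_mono_of_nonneg _ hg2int
      · filter_upwards [ae_restrict_mem measurableSet_Ioc] with s hs
        exact hb2 s hs
      · filter_upwards [ae_restrict_mem measurableSet_Ioc] with s hs
        exact hfnonneg s (lt_trans ht2pos hs.1) (hs.2.trans ht1t)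
    have hle3 : (∫ s in Set.Ioc (t - 1) t, f s) ≤ ∫ s in Set.Ioc (t - 1) t, g3 s := by
      apply integral_mono_of_nonneg _ hg3int
      · filter_upwards [ae_restrict_mem measurableSet_Ioc] with s hs
        exact hb3 s hs
      · filter_upwards [ae_restrict_mem measurableSet_Ioc] with s hs
        exact hfnonneg s (by linarith [hs.1]) hs.2
    have hminval : min (t ^ (-α)) 1 = t ^ (-α) :=
      min_eq_left (Real.rpow_le_one_of_one_le_of_nonpos (by linarith) (by linarith))
    have h9 : (0:ℝ) ≤ t ^ (-α) := Real.rpow_nonneg ht.le _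
    rw [hminval, hsplit]
    have h4α : (4:ℝ)/α ≤ 8/α := by gcongr <;> norm_num
    calc (∫ s in Set.Ioc 0 (t/2), f s) + (∫ s in Set.Ioc (t/2) (t - 1), f s)
          + (∫ s in Set.Ioc (t - 1) t, f s)
        ≤ (2 / (1 - α)) * t ^ (-α) + (2 / α) * t ^ (-α) + (2 / α) * t ^ (-α) := by
          apply add_le_add (add_le_add (hle1.trans hint1) (hle2.trans hint2)) (hle3.trans hint3)
      _ = (2 / (1 - α) + 4 / α) * t ^ (-α) := by ring
      _ ≤ (2 / (1 - α) + 8 / α) * t ^ (-α) := by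
          apply mul_le_mul_of_nonneg_right _ h9
          linarith
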